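/- Let p be an odd prime and λ a symmetric partition of n with empty p-core such that the middle component λ_{(p−1)/2} of its p-quotient is empty. Then the diagonal hook lengths of λ come in pairs (d, d*) with d + d* ≡ 0 (mod 2p); more precisely d = 2(xp + γ) + 1 and d* = 2((−x*−1)p + (p−1−γ)) + 1 for some integers x, x* and 0 ≤ γ ≤ p−1, γ ≠ (p−1)/2, so that d + d* = 2p(x − x*). In particular the number of diagonal hooks of λ is even and n ≡ 0 mod 2p. -/

import Mathlib

open Classical in
/-- The partition sequence of a partition, encoded via its parts
`f 0 ≥ f 1 ≥ ⋯`: position `u ∈ ℤ` carries a `0` exactly when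
`u = f i − (i+1)` for some `i`. -/
noncomputable def partitionSeq (f : ℕ → ℕ) (u : ℤ) : ℕ :=
  if ∃ i : ℕ, (f i : ℤ) - (i + 1) = u then 0 else 1

/-- The conjugate partition: `λ*_{i+1}` is the number of parts `> i`. -/
noncomputable def conjPartition (f : ℕ → ℕ) (i : ℕ) : ℕ :=
  Nat.card {j : ℕ | i < f j}

lemma ps_eq_zero_iff (f : ℕ → ℕ) (u : ℤ) :
    partitionSeq f u = 0 ↔ ∃ i : ℕ, (f i : ℤ) - (i + 1) = u := by
  unfold partitionSeq; split <;> simp_all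

lemma ps_eq_one_iff (f : ℕ → ℕ) (u : ℤ) :
    partitionSeq f u = 1 ↔ ¬∃ i : ℕ, (f i : ℤ) - (i + 1) = u := by
  unfold partitionSeq; split <;> simp_all

lemma ps_zero_or_one (f : ℕ → ℕ) (u : ℤ) :
    partitionSeq f u = 0 ∨ partitionSeq f u = 1 := by
  unfold partitionSeq; split
  · exact Or.inl rfl
  · exact Or.inr rfl

lemma mem_iff_lt_ncard {S : Set ℕ} (hdc : ∀ a b : ℕ, a ≤ b → b ∈ S → a ∈ S)
    (hfin : S.Finite) (i : ℕ) : i ∈ S ↔ i < Nat.card S := by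
  constructor
  · intro hi
    have hsub : Set.Iic i ⊆ S := fun a ha => hdc a i ha hi
    have h1 : (Set.Iic i).ncard ≤ S.ncard := Set.ncard_le_ncard hsub hfin
    have h2 : (Set.Iic i).ncard = i + 1 := by
      rw [← Finset.coe_Iic, Set.ncard_coe_finset, Nat.card_Iic]
    rw [Nat.card_coe_set_eq]
    omega
  · intro hi
    by_contra hnot
    have hsub : S ⊆ Set.Iio i := fun a ha =>
      lt_of_not_ge fun h => hnot (hdc i a h ha)
    have h1 : S.ncard ≤ (Set.Iio i).ncard :=
      Set.ncard_le_ncard hsub (Set.finite_Iio i)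
    have h2 : (Set.Iio i).ncard = i := by
      rw [← Finset.coe_Iio, Set.ncard_coe_finset, Nat.card_Iio]
    rw [Nat.card_coe_set_eq] at hi
    omega

lemma galois_lemma (f : ℕ → ℕ) (hmono : Antitone f) (N : ℕ)
    (hfinN : ∀ i, N ≤ i → f i = 0) (i j : ℕ) :
    j < f i ↔ i < conjPartition f j := by
  have hdc : ∀ a b : ℕ, a ≤ b → b ∈ {i : ℕ | j < f i} → a ∈ {i : ℕ | j < f i} :=
    fun a b hab hb => lt_of_lt_of_le hb (hmono hab)
  have hfin' : {i : ℕ | j < f i}.Finite := by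
    apply Set.Finite.subset (Set.finite_Iio N)
    intro x hx
    simp only [Set.mem_setOf_eq] at hx
    simp only [Set.mem_Iio]
    by_contra hc
    have := hfinN x (by omega)
    omega
  exact mem_iff_lt_ncard hdc hfin' i

lemma sym_lemma (f : ℕ → ℕ) (hmono : Antitone f) (N : ℕ)
    (hfinN : ∀ i, N ≤ i → f i = 0) (hsym : conjPartition f = f) (u : ℤ) :
    partitionSeq f u = 0 ↔ partitionSeq f (-1 - u) = 1 := by
  have hG : ∀ i j : ℕ, j < f i ↔ i < f j := fun i j => by
    rw [galois_lemma f hmono N hfinN i j, hsym]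
  constructor
  · intro h0
    obtain ⟨i, hi⟩ := (ps_eq_zero_iff f u).1 h0
    rw [ps_eq_one_iff]
    rintro ⟨j, hj⟩
    have := hG i j
    omega
  · intro h1
    rcases ps_zero_or_one f u with h | h
    · exact h
    exfalso
    rw [ps_eq_one_iff] at h h1
    -- build j with f j = j - u
    have hex : ∃ i : ℕ, (f i : ℤ) ≤ u + i :=
      ⟨N + u.natAbs, by have := hfinN (N + u.natAbs) (by omega); omega⟩
    rcases hfind : Nat.find hex with _ | k
    · -- f 0 ≤ u, use j = u.toNat
      have hf0 : (f 0 : ℤ) ≤ u + 0 := by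
        have := Nat.find_spec hex; rwa [hfind] at this
      have hu0 : 0 ≤ u := by omega
      set j := u.toNat with hj
      have hempty : {i : ℕ | j < f i} = ∅ := by
        apply Set.eq_empty_iff_forall_notMem.2
        intro i hi
        simp only [Set.mem_setOf_eq] at hi
        have := hmono (Nat.zero_le i)
        omega
      have hconj : conjPartition f j = 0 := by
        unfold conjPartition
        rw [hempty]; simp
      rw [hsym] at hconj
      exact h1 ⟨j, by omega⟩
    · have hk1 : (f (k+1) : ℤ) ≤ u + (k+1) := by
        have := Nat.find_spec hex; rw [hfind] at this; exact_mod_cast this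
      have hk : ¬((f k : ℤ) ≤ u + k) := by
        have := Nat.find_min hex (by omega : k < Nat.find hex)
        exact this
      have hne1 : (f k : ℤ) - (k + 1) ≠ u := fun hc => h ⟨k, hc⟩
      have hne2 : (f (k+1) : ℤ) - ((k+1) + 1) ≠ u := fun hc => h ⟨k+1, hc⟩
      set j := (u + k + 1).toNat with hjdef
      have hjval : (j : ℤ) = u + k + 1 := by
        have : (0:ℤ) ≤ f (k+1) := by positivity
        omega
      have hset : {i : ℕ | j < f i} = Set.Iic k := by
        ext i
        simp only [Set.mem_setOf_eq, Set.mem_Iic]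
        constructor
        · intro hi
          by_contra hc
          have := hmono (by omega : k + 1 ≤ i)
          omega
        · intro hi
          have := hmono (hi : i ≤ k)
          omega
      have hconj : conjPartition f j = k + 1 := by
        unfold conjPartition
        rw [hset, ← Finset.coe_Iic, Nat.card_coe_set_eq,
          Set.ncard_coe_finset, Nat.card_Iic]
      rw [hsym] at hconj
      exact h1 ⟨j, by omega⟩

lemma addMul_mod (V p g : ℕ) (h : g < p) : (V * p + g) % p = g := by
  rw [mul_comm, Nat.mul_add_mod, Nat.mod_eq_of_lt h]

lemma addMul_div (V p g : ℕ) (h : g < p) : (V * p + g) / p = V := by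
  rw [mul_comm, Nat.mul_add_div (by omega), Nat.div_eq_of_lt h, add_zero]

open Classical in
/-- Beads (nonnegative abacus positions) on runner `γ`, indexed by row. -/
noncomputable def runnerSet (p : ℕ) (f : ℕ → ℕ) (γ : ℕ) : Finset ℕ :=
  (Finset.range (f 0 + 1)).filter fun j => partitionSeq f ((j : ℤ) * p + γ) = 0

open Classical in
/-- Match the `j`-th smallest element of `s` with the corresponding
element of `t`. -/
noncomputable def pairFn (s t : Finset ℕ) (j : ℕ) : ℕ :=
  if h : j ∈ s ∧ s.card = t.card then
    ((t.orderIsoOfFin rfl)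
      (Fin.cast h.2 ((s.orderIsoOfFin rfl).symm ⟨j, h.1⟩)) : ℕ)
  else j

lemma pairFn_mem (s t : Finset ℕ) (j : ℕ) (hj : j ∈ s) (hc : s.card = t.card) :
    pairFn s t j ∈ t := by
  unfold pairFn
  rw [dif_pos ⟨hj, hc⟩]
  exact Finset.coe_mem _

lemma pairFn_invol (s t : Finset ℕ) (j : ℕ) (hj : j ∈ s) (hc : s.card = t.card) :
    pairFn t s (pairFn s t j) = j := by
  have h1 : pairFn s t j = ((t.orderIsoOfFin rfl)
      (Fin.cast hc ((s.orderIsoOfFin rfl).symm ⟨j, hj⟩)) : ℕ) := by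
    unfold pairFn
    rw [dif_pos ⟨hj, hc⟩]
  rw [h1]
  unfold pairFn
  rw [dif_pos ⟨Finset.coe_mem _, hc.symm⟩]
  rw [Subtype.coe_eta, OrderIso.symm_apply_apply]
  have h3 : ∀ (pf : t.card = s.card),
      Fin.cast pf (Fin.cast hc ((s.orderIsoOfFin rfl).symm ⟨j, hj⟩))
        = (s.orderIsoOfFin rfl).symm ⟨j, hj⟩ := fun pf => by
    apply Fin.ext; simp
  rw [h3, OrderIso.apply_symm_apply]

/-- The pairing involution on diagonal-hook positions. -/
noncomputable def sig (p : ℕ) (f : ℕ → ℕ) (u : ℕ) : ℕ :=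
  pairFn (runnerSet p f (u % p)) (runnerSet p f (p - 1 - u % p)) (u / p) * p
    + (p - 1 - u % p)

theorem stmt_17 (p : ℕ) (hp : p.Prime) (hpodd : Odd p)
    (f : ℕ → ℕ) (hmono : Antitone f) (N : ℕ)
    (hfin : ∀ i, N ≤ i → f i = 0) (hsym : conjPartition f = f)
    (hcore : ∀ γ : ℕ, γ < p →
      Nat.card {j : ℕ | partitionSeq f ((j : ℤ) * p + γ) = 0}
        = Nat.card {j : ℕ | partitionSeq f ((-1 - (j : ℤ)) * p + γ) = 1})
    (hmid : ∀ j : ℤ, partitionSeq f (j * p + ((p - 1) / 2 : ℕ))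
        = if j < 0 then 0 else 1) :
    ∃ σ : ℕ → ℕ,
      (∀ u : ℕ, partitionSeq f (u : ℤ) = 0 → partitionSeq f (σ u : ℤ) = 0) ∧
      (∀ u : ℕ, partitionSeq f (u : ℤ) = 0 → σ (σ u) = u) ∧
      (∀ u : ℕ, partitionSeq f (u : ℤ) = 0 → σ u ≠ u) ∧
      (∀ u : ℕ, partitionSeq f (u : ℤ) = 0 →
        (2 * u + 1) + (2 * σ u + 1) ≡ 0 [MOD 2 * p]) ∧
      (∀ u : ℕ, partitionSeq f (u : ℤ) = 0 →
        ∃ γ : ℕ, γ < p ∧ γ ≠ (p - 1) / 2 ∧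
          ∃ x xs : ℤ, (2 * u + 1 : ℤ) = 2 * (x * p + γ) + 1 ∧
            (2 * (σ u : ℤ) + 1) = 2 * ((-xs - 1) * p + ((p : ℤ) - 1 - γ)) + 1) ∧
      Even (Nat.card {u : ℕ | partitionSeq f (u : ℤ) = 0}) ∧
      (∑ i ∈ Finset.range N, f i) ≡ 0 [MOD 2 * p] := by
  classical
  obtain ⟨r, hr⟩ := hpodd
  have hp1 : 1 ≤ p := hp.one_le
  have hG : ∀ i j : ℕ, j < f i ↔ i < f j := fun i j => by
    rw [galois_lemma f hmono N hfin i j, hsym]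
  have hSym : ∀ u : ℤ, partitionSeq f u = 0 ↔ partitionSeq f (-1 - u) = 1 :=
    sym_lemma f hmono N hfin hsym
  have bead_lt : ∀ u : ℤ, partitionSeq f u = 0 → u < f 0 := by
    intro u h
    obtain ⟨i, hi⟩ := (ps_eq_zero_iff f u).1 h
    have : f i ≤ f 0 := hmono (Nat.zero_le i)
    omega
  have hmodid : ∀ u : ℕ, ((u / p : ℕ) : ℤ) * (p : ℤ) + ((u % p : ℕ) : ℤ) = (u : ℤ) := by
    intro u
    rw [mul_comm]
    exact_mod_cast Nat.div_add_mod u p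
  have hmem : ∀ γ : ℕ, γ < p → ∀ j : ℕ,
      (j ∈ runnerSet p f γ ↔ partitionSeq f ((j : ℤ) * p + γ) = 0) := by
    intro γ hγ j
    simp only [runnerSet, Finset.mem_filter, Finset.mem_range]
    constructor
    · exact fun h => h.2
    · intro h
      refine ⟨?_, h⟩
      have hlt := bead_lt _ h
      have hj : (j : ℤ) * 1 ≤ (j : ℤ) * p := by
        apply mul_le_mul_of_nonneg_left (by exact_mod_cast hp1) (by positivity)
      omega
  have hbead_mem : ∀ u : ℕ, partitionSeq f (u : ℤ) = 0 →
      u / p ∈ runnerSet p f (u % p) := by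
    intro u h
    rw [hmem _ (Nat.mod_lt u hp1) _, hmodid u]
    exact h
  have hcardR : ∀ γ : ℕ, γ < p →
      (runnerSet p f γ).card = (runnerSet p f (p - 1 - γ)).card := by
    intro γ hγ
    have c1 : ∀ δ : ℕ, δ < p → (runnerSet p f δ).card
        = Nat.card {j : ℕ | partitionSeq f ((j : ℤ) * p + δ) = 0} := by
      intro δ hδ
      have e1 : ((runnerSet p f δ : Finset ℕ) : Set ℕ)
          = {j : ℕ | partitionSeq f ((j : ℤ) * p + δ) = 0} :=
        Set.ext fun j => by rw [Finset.mem_coe, hmem δ hδ j]; rfl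
      rw [← e1, Nat.card_coe_set_eq, Set.ncard_coe_finset]
    rw [c1 γ hγ, c1 _ (by omega), hcore γ hγ]
    have hset : {j : ℕ | partitionSeq f ((-1 - (j : ℤ)) * p + γ) = 1}
        = {j : ℕ | partitionSeq f ((j : ℤ) * p + ((p - 1 - γ : ℕ) : ℤ)) = 0} := by
      ext j
      simp only [Set.mem_setOf_eq]
      have hpos : -1 - ((j : ℤ) * p + ((p - 1 - γ : ℕ) : ℤ))
          = (-1 - (j : ℤ)) * p + (γ : ℤ) := by
        have hc : ((p - 1 - γ : ℕ) : ℤ) = (p : ℤ) - 1 - γ := by omega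
        rw [hc]; ring
      rw [← hpos]
      exact (hSym ((j : ℤ) * p + ((p - 1 - γ : ℕ) : ℤ))).symm
    rw [hset]
  have hne : ∀ u : ℕ, partitionSeq f (u : ℤ) = 0 → u % p ≠ (p - 1) / 2 := by
    intro u h heq
    have hmid' := hmid ((u / p : ℕ) : ℤ)
    have hposid : ((u / p : ℕ) : ℤ) * p + (((p - 1) / 2 : ℕ) : ℤ) = (u : ℤ) := by
      rw [← heq]; exact hmodid u
    rw [hposid, if_neg (not_lt.2 (Int.natCast_nonneg _))] at hmid'
    omega
  -- basic facts about sig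
  have hsig_eq : ∀ u : ℕ, sig p f u
      = pairFn (runnerSet p f (u % p)) (runnerSet p f (p - 1 - u % p)) (u / p) * p
        + (p - 1 - u % p) := fun u => rfl
  have hVmem : ∀ u : ℕ, partitionSeq f (u : ℤ) = 0 →
      pairFn (runnerSet p f (u % p)) (runnerSet p f (p - 1 - u % p)) (u / p)
        ∈ runnerSet p f (p - 1 - u % p) := fun u h =>
    pairFn_mem _ _ _ (hbead_mem u h) (hcardR _ (Nat.mod_lt u hp1))
  have hσmod : ∀ u : ℕ, partitionSeq f (u : ℤ) = 0 →
      sig p f u % p = p - 1 - u % p := by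
    intro u h
    rw [hsig_eq, addMul_mod _ _ _ (by omega)]
  have hσdiv : ∀ u : ℕ, partitionSeq f (u : ℤ) = 0 →
      sig p f u / p
        = pairFn (runnerSet p f (u % p)) (runnerSet p f (p - 1 - u % p)) (u / p) := by
    intro u h
    rw [hsig_eq, addMul_div _ _ _ (by omega)]
  have hσ0 : ∀ u : ℕ, partitionSeq f (u : ℤ) = 0 →
      partitionSeq f ((sig p f u : ℕ) : ℤ) = 0 := by
    intro u h
    have hv := hVmem u h
    rw [hmem _ (by omega) _] at hv
    have hcast : ((sig p f u : ℕ) : ℤ)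
        = ((pairFn (runnerSet p f (u % p)) (runnerSet p f (p - 1 - u % p)) (u / p) : ℕ) : ℤ)
            * p + ((p - 1 - u % p : ℕ) : ℤ) := by
      rw [hsig_eq]; push_cast; ring
    rw [hcast]
    exact hv
  have hσσ : ∀ u : ℕ, partitionSeq f (u : ℤ) = 0 → sig p f (sig p f u) = u := by
    intro u h
    rw [hsig_eq (sig p f u), hσmod u h, hσdiv u h]
    have h3 : p - 1 - (p - 1 - u % p) = u % p := by
      have := Nat.mod_lt u hp1; omega
    rw [h3, pairFn_invol _ _ _ (hbead_mem u h) (hcardR _ (Nat.mod_lt u hp1)),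
      Nat.mul_comm (u / p) p]
    exact Nat.div_add_mod u p
  have hσne : ∀ u : ℕ, partitionSeq f (u : ℤ) = 0 → sig p f u ≠ u := by
    intro u h hc
    have h1 := hσmod u h
    have h2 := hne u h
    have h3 := Nat.mod_lt u hp1
    rw [hc] at h1
    omega
  -- the divisibility of pair sums
  have hσsum : ∀ u : ℕ, partitionSeq f (u : ℤ) = 0 →
      2 * p ∣ (2 * u + 1) + (2 * sig p f u + 1) := by
    intro u h
    rw [← Int.natCast_dvd_natCast]
    have h1 : ((u / p : ℕ) : ℤ) * p + ((u % p : ℕ) : ℤ) = (u : ℤ) := hmodid u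
    have h2 : ((sig p f u / p : ℕ) : ℤ) * p + ((sig p f u % p : ℕ) : ℤ)
        = ((sig p f u : ℕ) : ℤ) := hmodid _
    rw [hσmod u h] at h2
    have h4 : ((p - 1 - u % p : ℕ) : ℤ) = (p : ℤ) - 1 - (u % p : ℕ) := by
      have := Nat.mod_lt u hp1; omega
    rw [h4] at h2
    refine ⟨(u / p : ℕ) + (sig p f u / p : ℕ) + 1, ?_⟩
    push_cast at h1 h2 ⊢
    linear_combination (-2) * h1 + (-2) * h2

  -- the finset of diagonal-hook positions
  set F2 : Finset ℕ := (Finset.range (f 0)).filter (fun u => partitionSeq f (u : ℤ) = 0)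
    with hF2
  have hmemF2 : ∀ u : ℕ, u ∈ F2 ↔ partitionSeq f (u : ℤ) = 0 := by
    intro u
    simp only [hF2, Finset.mem_filter, Finset.mem_range]
    constructor
    · exact fun h => h.2
    · intro h
      exact ⟨by exact_mod_cast bead_lt u h, h⟩
  set A : Finset ℕ := F2.filter (fun u => u % p < r) with hA
  set B : Finset ℕ := F2.filter (fun u => r < u % p) with hB
  have hbeadA : ∀ u ∈ A, partitionSeq f (u : ℤ) = 0 := fun u hu =>
    (hmemF2 u).1 (Finset.mem_filter.1 hu).1
  have hbeadB : ∀ u ∈ B, partitionSeq f (u : ℤ) = 0 := fun u hu =>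
    (hmemF2 u).1 (Finset.mem_filter.1 hu).1
  have hmapAB : ∀ u ∈ A, sig p f u ∈ B := by
    intro u hu
    have h0 := hbeadA u hu
    have hur := (Finset.mem_filter.1 hu).2
    rw [hB, Finset.mem_filter]
    refine ⟨(hmemF2 _).2 (hσ0 u h0), ?_⟩
    rw [hσmod u h0]
    have := Nat.mod_lt u hp1
    omega
  have hmapBA : ∀ u ∈ B, sig p f u ∈ A := by
    intro u hu
    have h0 := hbeadB u hu
    have hur := (Finset.mem_filter.1 hu).2
    have hneu := hne u h0
    rw [hA, Finset.mem_filter]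
    refine ⟨(hmemF2 _).2 (hσ0 u h0), ?_⟩
    rw [hσmod u h0]
    have := Nat.mod_lt u hp1
    omega
  have hcardAB : A.card = B.card :=
    Finset.card_bij' (fun a _ => sig p f a) (fun b _ => sig p f b) hmapAB hmapBA
      (fun a ha => hσσ a (hbeadA a ha)) (fun b hb => hσσ b (hbeadB b hb))
  have hBeq : F2.filter (fun u => ¬ u % p < r) = B := by
    rw [hB]
    apply Finset.filter_congr
    intro u hu
    have h0 := (hmemF2 u).1 hu
    have h3 := hne u h0
    have h4 := Nat.mod_lt u hp1
    constructor
    · intro h5; omega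
    · intro h5; omega
  have hsplitCard : F2.card = A.card + B.card := by
    have h1 := Finset.card_filter_add_card_filter_not
      (s := F2) (p := fun u => u % p < r)
    rw [hBeq] at h1
    rw [hA]
    omega
  -- counting n by diagonal hooks
  set D : Finset ℕ := (Finset.range N).filter (fun k => k < f k) with hD
  set C : Finset (ℕ × ℕ) :=
    ((Finset.range N) ×ˢ (Finset.range (f 0 + 1))).filter (fun c => c.2 < f c.1) with hC
  have hs1 : C.card = ∑ i ∈ Finset.range N, f i := by
    rw [Finset.card_eq_sum_card_fiberwise (f := fun c => c.1) (t := Finset.range N)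
      (fun c hc => by
        rw [hC, Finset.mem_coe, Finset.mem_filter, Finset.mem_product] at hc
        exact hc.1.1)]
    apply Finset.sum_congr rfl
    intro i hi
    rw [Finset.mem_range] at hi
    have hfib : (C.filter fun c => c.1 = i) = {i} ×ˢ Finset.range (f i) := by
      ext ⟨a, b⟩
      simp only [hC, Finset.mem_filter, Finset.mem_product, Finset.mem_range,
        Finset.mem_singleton]
      constructor
      · rintro ⟨⟨⟨h1, h2⟩, h3⟩, h4⟩
        subst h4
        exact ⟨rfl, h3⟩
      · rintro ⟨h4, h2⟩
        subst h4
        have hfi : f a ≤ f 0 := hmono (Nat.zero_le a)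
        exact ⟨⟨⟨hi, by omega⟩, h2⟩, rfl⟩
    rw [hfib]
    simp
  have hs2 : C.card = ∑ k ∈ D, (2 * f k - (2 * k + 1)) := by
    rw [Finset.card_eq_sum_card_fiberwise (f := fun c => min c.1 c.2) (t := D)
      (fun c hc => by
        obtain ⟨a, b⟩ := c
        simp only [hC, Finset.mem_coe, Finset.mem_filter, Finset.mem_product, Finset.mem_range] at hc
        obtain ⟨⟨ha, hb⟩, hab⟩ := hc
        rw [hD, Finset.mem_coe, Finset.mem_filter, Finset.mem_range]
        dsimp only
        rcases Nat.le_total a b with hle | hle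
        · rw [min_eq_left hle]
          exact ⟨ha, by omega⟩
        · have hm2 := hmono hle
          rw [min_eq_right hle]
          exact ⟨by omega, by omega⟩)]
    apply Finset.sum_congr rfl
    intro k hk
    rw [hD, Finset.mem_filter, Finset.mem_range] at hk
    obtain ⟨hkN, hkf⟩ := hk
    have hfk0 : f k ≤ f 0 := hmono (Nat.zero_le k)
    have hkey : C.filter (fun c => min c.1 c.2 = k)
        = {k} ×ˢ Finset.Ico k (f k) ∪ Finset.Ico (k + 1) (f k) ×ˢ {k} := by
      ext ⟨a, b⟩
      simp only [hC, Finset.mem_filter, Finset.mem_product, Finset.mem_range,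
        Finset.mem_union, Finset.mem_Ico, Finset.mem_singleton]
      constructor
      · rintro ⟨⟨⟨ha, hb⟩, hab⟩, hmin⟩
        rcases Nat.le_total a b with hle | hle
        · left
          have hak : a = k := by rw [min_eq_left hle] at hmin; exact hmin
          subst hak
          exact ⟨rfl, hle, hab⟩
        · have hbk : b = k := by rw [min_eq_right hle] at hmin; exact hmin
          subst hbk
          by_cases hab2 : a = b
          · left
            subst hab2
            exact ⟨rfl, le_refl a, hab⟩
          · right
            have hga : a < f b := (hG a b).1 hab
            exact ⟨⟨by omega, hga⟩, rfl⟩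
      · rintro (⟨hak, hkb, hbf⟩ | ⟨⟨hka, haf⟩, hbk⟩)
        · subst hak
          refine ⟨⟨⟨hkN, by omega⟩, hbf⟩, ?_⟩
          rw [min_eq_left hkb]
        · subst hbk
          have hfa : b < f a := (hG a b).2 haf
          refine ⟨⟨⟨?_, by omega⟩, hfa⟩, ?_⟩
          · by_contra hc2
            have := hfin a (by omega)
            omega
          · rw [min_eq_right (by omega)]
    rw [hkey, Finset.card_union_of_disjoint, Finset.card_product, Finset.card_product,
      Finset.card_singleton, Nat.card_Ico, Nat.card_Ico]
    · omega
    · rw [Finset.disjoint_left]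
      rintro ⟨a, b⟩ h1 h2
      simp only [Finset.mem_product, Finset.mem_singleton, Finset.mem_Ico] at h1 h2
      omega
  have hs3 : ∑ k ∈ D, (2 * f k - (2 * k + 1)) = ∑ u ∈ F2, (2 * u + 1) := by
    apply Finset.sum_nbij (i := fun k => f k - (k + 1))
    · intro k hk
      rw [hD, Finset.mem_filter, Finset.mem_range] at hk
      rw [hmemF2, ps_eq_zero_iff]
      exact ⟨k, by omega⟩
    · intro k1 h1 k2 h2 heq
      simp only [hD, Finset.coe_filter, Set.mem_setOf_eq, Finset.mem_range] at h1 h2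
      simp only at heq
      by_contra hne2
      rcases Nat.lt_or_ge k1 k2 with hlt | hge
      · have := hmono (Nat.le_of_lt hlt)
        omega
      · have hlt : k2 < k1 := by omega
        have := hmono (Nat.le_of_lt hlt)
        omega
    · intro u hu
      rw [Finset.mem_coe] at hu
      have h0 := (hmemF2 u).1 hu
      obtain ⟨i, hi⟩ := (ps_eq_zero_iff f _).1 h0
      rw [Set.mem_image]
      refine ⟨i, ?_, by omega⟩
      rw [Finset.mem_coe, hD, Finset.mem_filter, Finset.mem_range]
      constructor
      · by_contra hc2
        have := hfin i (by omega)
        omega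
      · omega
    · intro k hk
      rw [hD, Finset.mem_filter, Finset.mem_range] at hk
      omega
  have hBsum : ∑ u ∈ B, (2 * u + 1) = ∑ u ∈ A, (2 * sig p f u + 1) := by
    apply Finset.sum_nbij' (i := fun u => sig p f u) (j := fun u => sig p f u)
      hmapBA hmapAB
      (fun u hu => hσσ u (hbeadB u hu)) (fun u hu => hσσ u (hbeadA u hu))
    intro u hu
    rw [hσσ u (hbeadB u hu)]
  have hsplitSum : ∑ u ∈ F2, (2 * u + 1)
      = ∑ u ∈ A, (2 * u + 1) + ∑ u ∈ B, (2 * u + 1) := by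
    have h1 := Finset.sum_filter_add_sum_filter_not F2 (fun u => u % p < r)
      (fun u => 2 * u + 1)
    rw [hBeq] at h1
    rw [hA]
    omega
  have hs4 : 2 * p ∣ ∑ u ∈ F2, (2 * u + 1) := by
    rw [hsplitSum, hBsum, ← Finset.sum_add_distrib]
    apply Finset.dvd_sum
    intro u hu
    exact hσsum u (hbeadA u hu)
  refine ⟨sig p f, hσ0, hσσ, hσne, ?_, ?_, ?_, ?_⟩
  · intro u h
    rw [Nat.modEq_zero_iff_dvd]
    exact hσsum u h
  · intro u h
    refine ⟨u % p, Nat.mod_lt u hp1, hne u h, (u / p : ℕ),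
      -((sig p f u / p : ℕ) : ℤ) - 1, ?_, ?_⟩
    · have h1 := hmodid u
      linear_combination (-2) * h1
    · have h2 : ((sig p f u / p : ℕ) : ℤ) * p + ((sig p f u % p : ℕ) : ℤ)
          = ((sig p f u : ℕ) : ℤ) := hmodid _
      rw [hσmod u h] at h2
      have h4 : ((p - 1 - u % p : ℕ) : ℤ) = (p : ℤ) - 1 - (u % p : ℕ) := by
        have := Nat.mod_lt u hp1; omega
      rw [h4] at h2
      linear_combination (-2) * h2
  · -- even number of diagonal hooks
    have hsetF : {u : ℕ | partitionSeq f (u : ℤ) = 0} = (F2 : Set ℕ) := by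
      ext u
      rw [Set.mem_setOf_eq, Finset.mem_coe, hmemF2]
    rw [hsetF, Nat.card_coe_set_eq, Set.ncard_coe_finset]
    exact ⟨A.card, by omega⟩
  · -- n ≡ 0 mod 2p
    have htot : ∑ i ∈ Finset.range N, f i = ∑ u ∈ F2, (2 * u + 1) := by
      rw [← hs1, hs2, hs3]
    rw [Nat.modEq_zero_iff_dvd, htot]
    exact hs4
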